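/- For every finite string W over {A, X, B}, the following identities hold among open values in the tight puzzle, where concatenation is denoted by juxtaposition: (1) |WAAA| + t|W| = 0; (2) |WXAA| − t|W| = 0; (3) |WXXA| + t|W| = 0; (4) |WAXA| − t|WA| − 2t|W| = 0; (5) |WABA| + t|WA| + t|W| = 0. -/

import Mathlib

/-!
The "tight puzzle" of Schwartz–Tabachnikov.  Strings over the alphabet `{A, X, B}`;
word list (coefficient, weight): `X (1,0)`, `XA (1,1)`, `XAA (1,1)`, `AXA (2,1)`,
`AAA (-1,1)`, `BA (-1,1)`, `ABA (-1,1)`, `XXA (-1,1)`; in a parsing the word `X` may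
never be immediately followed by the word `XA` or the word `BA`.
-/

open scoped Classical

/-- The three-letter alphabet. -/
inductive PLetter | A | X | B
deriving DecidableEq

/-- Strings over the alphabet. -/
abbrev PWord := List PLetter

/-- The tight puzzle word list. -/
def tightWords : List PWord :=
  [[PLetter.X], [PLetter.X, PLetter.A], [PLetter.X, PLetter.A, PLetter.A],
   [PLetter.A, PLetter.X, PLetter.A], [PLetter.A, PLetter.A, PLetter.A],
   [PLetter.B, PLetter.A], [PLetter.A, PLetter.B, PLetter.A],
   [PLetter.X, PLetter.X, PLetter.A]]

/-- Coefficients of the words of the tight puzzle (`AXA ↦ 2`; `AAA, BA, ABA, XXA ↦ -1`;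
`X, XA, XAA ↦ 1`). -/
def tightCoeff (w : PWord) : ℤ :=
  if w = [PLetter.A, PLetter.X, PLetter.A] then 2
  else if w = [PLetter.A, PLetter.A, PLetter.A] ∨ w = [PLetter.B, PLetter.A] ∨
      w = [PLetter.A, PLetter.B, PLetter.A] ∨ w = [PLetter.X, PLetter.X, PLetter.A] then -1
  else 1

/-- Weights of the words: the word `X` has weight `0`, all other words weight `1`. -/
def wordWt (w : PWord) : ℕ := if w = [PLetter.X] then 0 else 1

/-- The forbidden adjacency: the word `X` immediately followed by `XA` or `BA`. -/
def Bad (u v : PWord) : Prop :=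
  u = [PLetter.X] ∧ (v = [PLetter.X, PLetter.A] ∨ v = [PLetter.B, PLetter.A])

/-- The contribution `coefficient · t^weight ∈ ℤ[t]` of a parsing `L`. -/
noncomputable def parseVal (c : PWord → ℤ) (L : List PWord) : Polynomial ℤ :=
  Polynomial.C ((L.map c).prod) * Polynomial.X ^ ((L.map wordWt).sum)

/-- `L` is a parsing in the tight puzzle: all its words are on the word list and the
forbidden adjacency never occurs. -/
def TightChain (L : List PWord) : Prop :=
  (∀ w ∈ L, w ∈ tightWords) ∧ List.Chain' (fun u v => ¬ Bad u v) L

/-- The *core* of a string: what remains after deleting all leading and trailing `X`s. -/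
def core (s : PWord) : PWord :=
  ((s.dropWhile (· == PLetter.X)).reverse.dropWhile (· == PLetter.X)).reverse

/-- `L` is a parsing of the bi-infinite string `⋯XX·W·XX⋯` (with the infinitely many
padding `X`s parsed as copies of the word `X` and trimmed away): the words of `L`
concatenate to `W` up to padding by `X`s on either side, `L` neither starts nor ends
with the word `X`, and (because of the padding `X`-words on the left) the first word
of `L` is not `XA` or `BA`. -/
def IsOpenParsing (W : PWord) (L : List PWord) : Prop :=
  TightChain L ∧ core L.flatten = core W ∧
  ∀ h : L ≠ [],
    L.head h ≠ [PLetter.X] ∧ L.head h ≠ [PLetter.X, PLetter.A] ∧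
    L.head h ≠ [PLetter.B, PLetter.A] ∧ L.getLast h ≠ [PLetter.X]

/-- `(r, L)` is a parsing of the cyclic string `(W)`: reading the necklace of the
letters of `W` starting at position `r`, the words of `L` concatenate to it, the
forbidden adjacency does not occur (cyclically), and `r < (last word).length`
(so that every parsing of the necklace is counted exactly once). -/
def IsCyclicParsing (W : PWord) (r : ℕ) (L : List PWord) : Prop :=
  TightChain L ∧
  ∃ h : L ≠ [], L.flatten = W.rotate r ∧ r < (L.getLast h).length ∧
    ¬ Bad (L.getLast h) (L.head h)

/-- `L` is a parsing of the locked string `[W]`: the words of `L` concatenate exactly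
to `W`, no padding allowed. -/
def IsLockedParsing (W : PWord) (L : List PWord) : Prop :=
  TightChain L ∧ L.flatten = W

/-- The nine words of both puzzles, as a function (used to enumerate parsings). -/
def wordOf : Fin 9 → PWord :=
  ![[PLetter.X], [PLetter.X, PLetter.A], [PLetter.X, PLetter.A, PLetter.A],
    [PLetter.X, PLetter.B, PLetter.A], [PLetter.A, PLetter.X, PLetter.A],
    [PLetter.A, PLetter.A, PLetter.A], [PLetter.B, PLetter.A],
    [PLetter.A, PLetter.B, PLetter.A], [PLetter.X, PLetter.X, PLetter.A]]

/-- The open value `|W| ∈ ℤ[t]`: the sum of `coefficient · t^weight` over all parsings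
of the bi-infinite string `⋯XX·W·XX⋯` (any such parsing consists of at most
`W.length + 2` words). -/
noncomputable def openVal (W : PWord) : Polynomial ℤ :=
  ∑ k ∈ Finset.range (W.length + 3), ∑ f : Fin k → Fin 9,
    if IsOpenParsing W ((List.ofFn f).map wordOf) then
      parseVal tightCoeff ((List.ofFn f).map wordOf)
    else 0

/-- The cyclic value `|(W)| ∈ ℤ[t]`: the sum of `coefficient · t^weight` over all
parsings of the cyclic string `(W)`. -/
noncomputable def cycVal (W : PWord) : Polynomial ℤ :=
  ∑ r ∈ Finset.range W.length, ∑ k ∈ Finset.range (W.length + 1), ∑ f : Fin k → Fin 9,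
    if IsCyclicParsing W r ((List.ofFn f).map wordOf) then
      parseVal tightCoeff ((List.ofFn f).map wordOf)
    else 0

/-- The locked value `|[W]| ∈ ℤ[t]`: the sum of `coefficient · t^weight` over all
parsings whose concatenation is exactly `W`. -/
noncomputable def lockVal (W : PWord) : Polynomial ℤ :=
  ∑ k ∈ Finset.range (W.length + 1), ∑ f : Fin k → Fin 9,
    if IsLockedParsing W ((List.ofFn f).map wordOf) then
      parseVal tightCoeff ((List.ofFn f).map wordOf)
    else 0


namespace Tight
open PLetter List

def trimL (s : PWord) : PWord := s.dropWhile (· == X)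

def mX (W : PWord) : ℕ := (((trimL W).reverse).takeWhile (· == X)).length

lemma trimL_eq_nil_iff {u : PWord} : trimL u = [] ↔ ∀ c ∈ u, c = X := by
  simp [trimL, List.dropWhile_eq_nil_iff]

lemma trimL_append_of_ne_nil {u : PWord} (h : trimL u ≠ []) (v : PWord) :
    trimL (u ++ v) = trimL u ++ v := by
  simp only [trimL, List.dropWhile_append]
  rw [if_neg (by rw [List.isEmpty_iff]; exact h)]

lemma trimL_append_of_nil {u : PWord} (h : trimL u = []) (v : PWord) :
    trimL (u ++ v) = trimL v := by
  simp only [trimL, List.dropWhile_append]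
  rw [if_pos (by rw [List.isEmpty_iff]; exact h)]

lemma head?_dropWhile_not (p : PLetter → Bool) (l : PWord) :
    ∀ a ∈ (l.dropWhile p).head?, ¬ p a := by
  induction l with
  | nil => simp
  | cons c t ih =>
    by_cases h : p c
    · simpa [List.dropWhile_cons, h] using ih
    · simp [List.dropWhile_cons, h]

lemma trimL_head {u : PWord} : ∀ a ∈ (trimL u).head?, a ≠ X := by
  intro a ha
  have := head?_dropWhile_not (· == X) u a ha
  simpa using this

lemma getLast?_suffix {l s : PWord} (h : l <:+ s) (hl : l ≠ []) :
    s.getLast? = l.getLast? := by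
  obtain ⟨p, rfl⟩ := h
  rw [List.getLast?_append]
  rcases hl' : l.getLast? with _ | a
  · exact absurd (List.getLast?_eq_none_iff.mp hl') hl
  · rfl

lemma core_eq_trimL {s : PWord} (h : s.getLast? ≠ some X) : core s = trimL s := by
  by_cases hn : trimL s = []
  · show ((s.dropWhile (· == X)).reverse.dropWhile (· == X)).reverse = trimL s
    have h0 : s.dropWhile (· == X) = [] := hn
    rw [h0, hn]; rfl
  · have hlast : (trimL s).getLast? = s.getLast? :=
      (getLast?_suffix (List.dropWhile_suffix _) hn).symm
    have hrev : (trimL s).reverse.head? = s.getLast? := by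
      rw [List.head?_reverse]; exact hlast
    show ((s.dropWhile (· == X)).reverse.dropWhile (· == X)).reverse = trimL s
    rcases hr : (trimL s).reverse with _ | ⟨b, u⟩
    · exfalso; exact hn (by simpa using congrArg List.reverse hr)
    · have hb : b ≠ X := by
        intro hbx
        rw [hr] at hrev; simp at hrev
        exact h (by rw [← hrev, hbx])
      have h1 : (s.dropWhile (· == X)).reverse = b :: u := hr
      rw [h1, List.dropWhile_cons, if_neg (by simpa using hb), ← h1]
      show (trimL s).reverse.reverse = trimL s
      exact List.reverse_reverse _

lemma trimL_eq_core_append (W : PWord) :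
    trimL W = core W ++ List.replicate (mX W) X := by
  have h1 : (trimL W).reverse.takeWhile (· == X) ++ (trimL W).reverse.dropWhile (· == X)
      = (trimL W).reverse := List.takeWhile_append_dropWhile
  have h2 : trimL W = ((trimL W).reverse.dropWhile (· == X)).reverse
      ++ ((trimL W).reverse.takeWhile (· == X)).reverse := by
    conv_lhs => rw [← List.reverse_reverse (trimL W), ← h1]
    rw [List.reverse_append]
  have h3 : ((trimL W).reverse.takeWhile (· == X)).reverse = List.replicate (mX W) X := by
    rw [List.eq_replicate_iff]
    constructor
    · simp [mX]
    · intro b hb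
      have := List.mem_takeWhile_imp (List.mem_reverse.mp hb)
      simpa using this
  rw [h2, h3]; rfl

lemma core_getLast_ne (W : PWord) : (core W).getLast? ≠ some X := by
  intro h
  have : (core W).reverse.head? = some X := by rw [List.head?_reverse]; exact h
  have h2 : ((trimL W).reverse.dropWhile (· == X)).head? = some X := by
    simpa [core, trimL] using this
  exact head?_dropWhile_not _ _ X h2 (by simp)

lemma core_nil_imp {W : PWord} (h : core W = []) : trimL W = [] ∧ mX W = 0 := by
  have := trimL_eq_core_append W
  rw [h] at this
  simp only [List.nil_append] at this
  rcases Nat.eq_zero_or_pos (mX W) with h0 | h0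
  · rw [h0] at this; simp [this, h0]
  · exfalso
    have : (trimL W).head? = some X := by
      rw [this]
      rcases m : mX W with _ | k
      · omega
      · simp [List.replicate_succ]
    exact trimL_head X this rfl

lemma core_length_le (W : PWord) : (core W).length + mX W ≤ W.length := by
  have h := congrArg List.length (trimL_eq_core_append W)
  simp at h
  have : (trimL W).length ≤ W.length := (List.dropWhile_suffix _).length_le
  omega

end Tight

namespace Tight2
open PLetter List Tight

def HeadOK (L : List PWord) : Prop :=
  ∀ u ∈ L.head?, u ≠ [X] ∧ u ≠ [X, A] ∧ u ≠ [B, A]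

def LastOK (L : List PWord) : Prop := ∀ u ∈ L.getLast?, u ≠ [X]

-- word facts
lemma tight_ne_nil {w : PWord} (h : w ∈ tightWords) : w ≠ [] := by
  fin_cases h <;> simp

lemma tight_last {w : PWord} (h : w ∈ tightWords) : w = [X] ∨ w.getLast? = some A := by
  fin_cases h <;> simp

lemma tight_allX {w : PWord} (h : w ∈ tightWords) (hx : ∀ c ∈ w, c = X) : w = [X] := by
  fin_cases h <;> simp_all

-- flatten lemmas
lemma flatten_concat (L : List PWord) (w : PWord) :
    (L ++ [w]).flatten = L.flatten ++ w := by simp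

lemma getLast?_flatten_concat {w : PWord} (L : List PWord) (hw : w ≠ []) :
    ((L ++ [w]).flatten).getLast? = w.getLast? := by
  rw [flatten_concat, List.getLast?_append]
  rcases h : w.getLast? with _ | a
  · exact absurd (List.getLast?_eq_none_iff.mp h) hw
  · rfl

lemma allX_nil {L : List PWord} (hT : ∀ w ∈ L, w ∈ tightWords) (hH : HeadOK L)
    (hz : trimL L.flatten = []) : L = [] := by
  rcases L with _ | ⟨c, t⟩
  · rfl
  · exfalso
    have hcx : ∀ x ∈ c, x = X := by
      intro x hx
      exact trimL_eq_nil_iff.mp hz x (List.mem_flatten.mpr ⟨c, by simp, hx⟩)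
    have : c = [X] := tight_allX (hT c (by simp)) hcx
    exact (hH c (by simp)).1 this

def Pre (U : PWord) (L : List PWord) : Prop :=
  TightChain L ∧ HeadOK L ∧ trimL L.flatten = U

lemma chain'_concat_left {R : PWord → PWord → Prop} {L : List PWord} {w : PWord}
    (h : List.Chain' R (L ++ [w])) : List.Chain' R L :=
  (List.isChain_append.mp h).1

lemma strip (V : PWord) (hV : V.getLast? ≠ some X) :
    ∀ (m : ℕ) (L : List PWord), TightChain L → HeadOK L →
      trimL L.flatten = V ++ List.replicate m X →
      ∃ L₂, L = L₂ ++ List.replicate m ([X] : PWord) ∧ TightChain L₂ ∧ HeadOK L₂ ∧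
        trimL L₂.flatten = V ∧ LastOK L₂ := by
  intro m
  induction m with
  | zero =>
    intro L hC hH htr
    simp only [List.replicate_zero, List.append_nil] at htr
    refine ⟨L, by simp, hC, hH, htr, ?_⟩
    intro u hu hux
    subst hux
    have hLne : L ≠ [] := by
      intro h0; rw [h0] at hu; simp at hu
    have hw : L.getLast hLne = [X] := by
      rw [List.getLast?_eq_getLast hLne] at hu
      exact Option.mem_some_iff.mp hu
    have hdec : L.dropLast ++ [[X]] = L := by
      rw [← hw]; exact List.dropLast_append_getLast hLne
    have hfl : L.flatten.getLast? = some X := by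
      rw [← hdec, getLast?_flatten_concat _ (by simp)]; rfl
    by_cases hz : trimL L.flatten = []
    · exact absurd (allX_nil hC.1 hH hz) hLne
    · have hsfx : L.flatten.getLast? = (trimL L.flatten).getLast? :=
        getLast?_suffix (l := trimL L.flatten) (List.dropWhile_suffix _) hz
      rw [htr] at hsfx
      exact hV (hsfx.symm.trans hfl)
  | succ m ih =>
    intro L hC hH htr
    have hVm : (V ++ List.replicate (m+1) X) ≠ [] := by simp
    have hlastX : (V ++ List.replicate (m+1) X).getLast? = some X := by
      rw [List.getLast?_append]
      simp [List.replicate_succ', List.getLast?_concat]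
    have htrne : trimL L.flatten ≠ [] := by rw [htr]; exact hVm
    have hLne : L ≠ [] := by
      intro h0; rw [h0] at htrne; simp [trimL] at htrne
    have hflast : L.flatten.getLast? = some X := by
      have hsfx : L.flatten.getLast? = (trimL L.flatten).getLast? :=
        getLast?_suffix (l := trimL L.flatten) (List.dropWhile_suffix _) htrne
      rw [htr] at hsfx; rw [hsfx]; exact hlastX
    -- last word is [X]
    set w := L.getLast hLne with hwdef
    have hdec : L.dropLast ++ [w] = L := List.dropLast_append_getLast hLne
    have hwmem : w ∈ L := List.getLast_mem hLne
    have hwt : w ∈ tightWords := hC.1 w hwmem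
    have hwX : w = [X] := by
      rcases tight_last hwt with h | h
      · exact h
      · exfalso
        have := getLast?_flatten_concat L.dropLast (tight_ne_nil hwt)
        rw [hdec] at this
        rw [this, h] at hflast
        simp at hflast
    set L₀ := L.dropLast with hL0
    have hzz : trimL L₀.flatten ≠ [] := by
      intro hz
      have hfl : ∀ c ∈ L₀.flatten, c = X := trimL_eq_nil_iff.mp hz
      have : ∀ c ∈ L.flatten, c = X := by
        intro c hc
        rw [← hdec] at hc
        simp only [flatten_concat, List.mem_append] at hc
        rcases hc with hc | hc
        · exact hfl c hc
        · rw [hwX] at hc; simpa using hc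
      exact htrne (trimL_eq_nil_iff.mpr this)
    have htr0 : trimL L₀.flatten = V ++ List.replicate m X := by
      have h1 : trimL L.flatten = trimL L₀.flatten ++ [X] := by
        rw [← hdec, flatten_concat, hwX, trimL_append_of_ne_nil hzz]
      rw [htr, List.replicate_succ', ← List.append_assoc] at h1
      exact (List.append_cancel_right h1.symm)
    have hL0ne : L₀ ≠ [] := by
      intro h0; rw [h0] at hzz; simp [trimL] at hzz
    have hC0 : TightChain L₀ := by
      refine ⟨fun u hu => hC.1 u (by rw [← hdec]; exact List.mem_append_left _ hu), ?_⟩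
      have := hC.2; rw [← hdec] at this
      exact chain'_concat_left this
    have hH0 : HeadOK L₀ := by
      intro u hu
      apply hH
      rw [← hdec, List.head?_append, hu]; rfl
    obtain ⟨L₂, h2, h3, h4, h5, h6⟩ := ih L₀ hC0 hH0 htr0
    refine ⟨L₂, ?_, h3, h4, h5, h6⟩
    rw [← hdec, h2, hwX, List.replicate_succ', ← List.append_assoc]

end Tight2

namespace Tight3
open PLetter List Tight Tight2

lemma xword_mem : ([X] : PWord) ∈ tightWords := by simp [tightWords]

lemma core_flatten_eq (L : List PWord) (hT : ∀ w ∈ L, w ∈ tightWords) (hL : LastOK L) :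
    core L.flatten = trimL L.flatten := by
  rcases eq_or_ne L [] with rfl | hne
  · simp [core, trimL]
  · set w := L.getLast hne with hw
    have hdec : L.dropLast ++ [w] = L := List.dropLast_append_getLast hne
    have hwmem : w ∈ L := List.getLast_mem hne
    have hwt : w ∈ tightWords := hT w hwmem
    have hwX : w ≠ [X] := hL w (List.getLast?_eq_getLast hne ▸ rfl)
    have hlA : w.getLast? = some A := (tight_last hwt).resolve_left hwX
    have : L.flatten.getLast? = some A := by
      rw [← hdec, getLast?_flatten_concat _ (tight_ne_nil hwt)]; exact hlA
    exact core_eq_trimL (by rw [this]; simp)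

lemma open_iff' (W : PWord) (L : List PWord) :
    IsOpenParsing W L ↔ TightChain L ∧ core L.flatten = core W ∧ HeadOK L ∧ LastOK L := by
  constructor
  · rintro ⟨h1, h2, h3⟩
    refine ⟨h1, h2, ?_, ?_⟩
    · intro u hu
      have hne : L ≠ [] := by intro h0; rw [h0] at hu; simp at hu
      rw [List.head?_eq_head hne] at hu
      obtain ⟨a, b, c, _⟩ := h3 hne
      have := Option.mem_some_iff.mp hu
      subst this; exact ⟨a, b, c⟩
    · intro u hu
      have hne : L ≠ [] := by intro h0; rw [h0] at hu; simp at hu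
      rw [List.getLast?_eq_getLast hne] at hu
      have := Option.mem_some_iff.mp hu
      subst this; exact (h3 hne).2.2.2
  · rintro ⟨h1, h2, h3, h4⟩
    refine ⟨h1, h2, fun hne => ?_⟩
    obtain ⟨a, b, c⟩ := h3 (L.head hne) (List.head?_eq_head hne ▸ rfl)
    exact ⟨a, b, c, h4 (L.getLast hne) (List.getLast?_eq_getLast hne ▸ rfl)⟩

lemma flatten_replicate (m : ℕ) : (List.replicate m ([X] : PWord)).flatten = List.replicate m X := by
  induction m with
  | zero => simp
  | succ n ih => simp [List.replicate_succ, ih]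

lemma chain'_replicate {R : PWord → PWord → Prop} {a : PWord} (h : R a a) (m : ℕ) :
    List.Chain' R (List.replicate m a) := by
  induction m with
  | zero => exact List.isChain_nil
  | succ n ih =>
    rw [List.replicate_succ]
    cases n with
    | zero => exact List.isChain_singleton _
    | succ k =>
      rw [List.replicate_succ]
      exact List.IsChain.cons_cons h (by rw [← List.replicate_succ]; exact ih)

lemma pre_iff (W : PWord) (L : List PWord) :
    Pre (trimL W) L ↔
      ∃ L₂, L = L₂ ++ List.replicate (mX W) ([X] : PWord) ∧ IsOpenParsing W L₂ := by
  constructor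
  · rintro ⟨hC, hH, htr⟩
    rw [trimL_eq_core_append W] at htr
    obtain ⟨L₂, hdec, hC2, hH2, htr2, hL2⟩ :=
      strip (core W) (core_getLast_ne W) (mX W) L hC hH htr
    refine ⟨L₂, hdec, (open_iff' W L₂).mpr ⟨hC2, ?_, hH2, hL2⟩⟩
    rw [core_flatten_eq L₂ hC2.1 hL2, htr2]
  · rintro ⟨L₂, rfl, hO⟩
    obtain ⟨hC2, hcore, hH2, hL2⟩ := (open_iff' W L₂).mp hO
    have htr2 : trimL L₂.flatten = core W := by
      rw [← core_flatten_eq L₂ hC2.1 hL2]; exact hcore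
    have hflat : (L₂ ++ List.replicate (mX W) ([X] : PWord)).flatten
        = L₂.flatten ++ List.replicate (mX W) X := by
      rw [List.flatten_append, flatten_replicate]
    by_cases hcw : core W = []
    · have hz : trimL L₂.flatten = [] := by rw [htr2, hcw]
      have hL2nil : L₂ = [] := allX_nil hC2.1 hH2 hz
      obtain ⟨ht0, hm0⟩ := core_nil_imp hcw
      subst hL2nil
      rw [hm0]
      refine ⟨⟨by simp, List.isChain_nil⟩, by simp [HeadOK], ?_⟩
      show trimL ([] ++ List.replicate 0 ([X] : PWord)).flatten = trimL W
      simp only [List.replicate_zero, List.append_nil, List.flatten_nil]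
      rw [ht0]; rfl
    · have hz : trimL L₂.flatten ≠ [] := by rw [htr2]; exact hcw
      have hL2ne : L₂ ≠ [] := by intro h0; rw [h0] at hz; simp [trimL] at hz
      refine ⟨⟨?_, ?_⟩, ?_, ?_⟩
      case neg.refine_3 =>
        intro u hu
        rw [List.head?_append] at hu
        rcases hh : L₂.head? with _ | a
        · exact absurd (List.head?_eq_none_iff.mp hh) hL2ne
        · rw [hh] at hu
          exact hH2 u (by rw [hh]; exact hu)
      case neg.refine_4 =>
        show trimL (L₂ ++ List.replicate (mX W) ([X] : PWord)).flatten = trimL W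
        rw [hflat, trimL_append_of_ne_nil hz, htr2, trimL_eq_core_append W]
      · intro w hw
        rcases List.mem_append.mp hw with h | h
        · exact hC2.1 w h
        · rw [List.eq_of_mem_replicate h]; exact xword_mem
      · refine List.isChain_append.mpr ?_
        refine ⟨hC2.2, chain'_replicate (by simp [Bad]) _, ?_⟩
        intro x hx y hy
        have : y = [X] := by
          rcases m : mX W with _ | k
          · rw [m] at hy; simp at hy
          · rw [m, List.replicate_succ] at hy
            simpa using (Option.mem_some_iff.mp hy).symm
        subst this; simp [Bad]
end Tight3

namespace Tight4
open PLetter List Tight Tight2 Tight3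

lemma trimL_append_nonX (W : PWord) (a : PLetter) (t : PWord) (ha : a ≠ X) :
    trimL (W ++ a :: t) = trimL W ++ a :: t := by
  by_cases h : trimL W = []
  · rw [trimL_append_of_nil h, h]
    simp only [List.nil_append]
    show List.dropWhile _ _ = _
    rw [List.dropWhile_cons, if_neg (by simpa using ha)]
  · exact trimL_append_of_ne_nil h _

lemma core_append_A (W s : PWord) (hs : s.getLast? = some A) :
    core (W ++ s) = trimL (W ++ s) := by
  apply core_eq_trimL
  have hne : s ≠ [] := by intro h0; rw [h0] at hs; simp at hs
  rw [List.getLast?_append, hs]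
  simp

lemma flatten_getLast?' {L₀ : List PWord} {w : PWord} (hne : L₀ ≠ [])
    (h : L₀.getLast hne = w) (hw : w ≠ []) : L₀.flatten.getLast? = w.getLast? := by
  have hdec : L₀.dropLast ++ [w] = L₀ := by rw [← h]; exact List.dropLast_append_getLast hne
  rw [← hdec, getLast?_flatten_concat _ hw]

lemma last_word_X {L₀ : List PWord} (hT : ∀ w ∈ L₀, w ∈ tightWords) (hne : L₀ ≠ [])
    (hfl : L₀.flatten.getLast? = some X) : L₀.getLast? = some [X] := by
  set w := L₀.getLast hne with hw
  have hwt : w ∈ tightWords := hT w (List.getLast_mem hne)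
  rcases tight_last hwt with h | h
  · rw [List.getLast?_eq_getLast hne, ← hw, h]
  · exfalso
    have := flatten_getLast?' hne hw.symm (tight_ne_nil hwt)
    rw [this, h] at hfl
    simp at hfl

lemma lastOK_of_flatten {L₀ : List PWord} (hT : ∀ w ∈ L₀, w ∈ tightWords)
    (hfl : L₀.flatten.getLast? = some A) : LastOK L₀ := by
  intro u hu hux
  subst hux
  have hne : L₀ ≠ [] := by intro h0; rw [h0] at hu; simp at hu
  have hlw : L₀.getLast hne = [X] := by
    rw [List.getLast?_eq_getLast hne] at hu
    exact Option.mem_some_iff.mp hu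
  have := flatten_getLast?' hne hlw (by simp)
  rw [this] at hfl
  simp at hfl

lemma trimL_flatten_suffix_last {L₀ : List PWord} (hz : trimL L₀.flatten ≠ []) :
    L₀.flatten.getLast? = (trimL L₀.flatten).getLast? :=
  getLast?_suffix (l := trimL L₀.flatten) (List.dropWhile_suffix _) hz

lemma open_concat_analysis {W' : PWord} {L : List PWord} (h : IsOpenParsing W' L)
    (hcne : core W' ≠ []) :
    ∃ L₀ w, L = L₀ ++ [w] ∧ w ∈ tightWords ∧ w ≠ [X] ∧ TightChain L₀ ∧ HeadOK L₀ ∧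
      (∀ x ∈ L₀.getLast?, ¬ Bad x w) ∧
      ((L₀ = [] ∧ (w ≠ [X, A] ∧ w ≠ [B, A]) ∧ trimL w = core W') ∨
       (trimL L₀.flatten ≠ [] ∧ trimL L₀.flatten ++ w = core W')) := by
  obtain ⟨hC, hcore, hH, hL⟩ := (open_iff' W' L).mp h
  have hLne : L ≠ [] := by
    intro h0; subst h0
    exact hcne (by simpa [core] using hcore.symm)
  set w := L.getLast hLne with hw
  have hdec : L.dropLast ++ [w] = L := List.dropLast_append_getLast hLne
  have hwt : w ∈ tightWords := hC.1 w (List.getLast_mem hLne)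
  have hwX : w ≠ [X] := hL w (List.getLast?_eq_getLast hLne ▸ rfl)
  set L₀ := L.dropLast with hL0
  have hC0 : TightChain L₀ := by
    refine ⟨fun u hu => hC.1 u (by rw [← hdec]; exact List.mem_append_left _ hu), ?_⟩
    have := hC.2; rw [← hdec] at this
    exact chain'_concat_left this
  have hH0 : HeadOK L₀ := by
    intro u hu
    apply hH
    rw [← hdec, List.head?_append, hu]; rfl
  have hbad : ∀ x ∈ L₀.getLast?, ¬ Bad x w := by
    have := hC.2; rw [← hdec] at this
    have h3 := (List.isChain_append.mp this).2.2
    intro x hx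
    exact h3 x hx w rfl
  have htr : trimL L.flatten = core W' := by
    rw [← core_flatten_eq L hC.1 hL]; exact hcore
  refine ⟨L₀, w, hdec.symm, hwt, hwX, hC0, hH0, hbad, ?_⟩
  by_cases hz : trimL L₀.flatten = []
  · have hL0nil : L₀ = [] := allX_nil hC0.1 hH0 hz
    left
    refine ⟨hL0nil, ?_, ?_⟩
    · have hhw : L.head? = some w := by
        rw [← hdec, hL0nil]; rfl
      exact ⟨(hH w hhw).2.1, (hH w hhw).2.2⟩
    · rw [← htr, ← hdec, hL0nil]
      simp
  · right
    refine ⟨hz, ?_⟩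
    rw [← htr, ← hdec, Tight2.flatten_concat, trimL_append_of_ne_nil hz]

-- builder
lemma open_build {W' : PWord} {L₁ : List PWord} {w : PWord}
    (hwt : w ∈ tightWords)
    (hC : TightChain L₁) (hH : HeadOK L₁)
    (hbad : ∀ x ∈ L₁.getLast?, ¬ Bad x w)
    (hhead : L₁ = [] → (w ≠ [X] ∧ w ≠ [X, A] ∧ w ≠ [B, A]))
    (hwX : w ≠ [X])
    (hcore : core ((L₁ ++ [w]).flatten) = core W') :
    IsOpenParsing W' (L₁ ++ [w]) := by
  refine (open_iff' W' _).mpr ⟨⟨?_, ?_⟩, hcore, ?_, ?_⟩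
  · intro u hu
    rcases List.mem_append.mp hu with h | h
    · exact hC.1 u h
    · rw [List.mem_singleton.mp h]; exact hwt
  · refine List.isChain_append.mpr ?_
    exact ⟨hC.2, List.isChain_singleton _, fun x hx y hy => by
      rw [show y = w from (Option.mem_some_iff.mp hy).symm]; exact hbad x hx⟩
  · intro u hu
    rcases eq_or_ne L₁ [] with rfl | hne
    · simp at hu
      subst hu; exact hhead rfl
    · rw [List.head?_append] at hu
      rcases hh : L₁.head? with _ | a
      · exact absurd (List.head?_eq_none_iff.mp hh) hne
      · rw [hh] at hu
        exact hH u (by rw [hh]; exact hu)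
  · intro u hu
    rw [List.getLast?_concat] at hu
    have : w = u := Option.mem_some_iff.mp hu
    rw [← this]; exact hwX

end Tight4

namespace Tight5
open PLetter List Tight Tight2 Tight3 Tight4

lemma tight_cases {w : PWord} (h : w ∈ tightWords) :
    w = [X] ∨ w = [X, A] ∨ w = [X, A, A] ∨ w = [A, X, A] ∨ w = [A, A, A] ∨
      w = [B, A] ∨ w = [A, B, A] ∨ w = [X, X, A] := by
  simp only [tightWords, List.mem_cons, List.not_mem_nil, or_false] at h
  exact h

lemma split_main_bwd (W : PWord) (s : PWord) (hst : s ∈ tightWords)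
    (hs1 : s ≠ [X]) (hs2 : s ≠ [X, A]) (hs3 : s ≠ [B, A])
    (hsA : s.getLast? = some A)
    {L₁ : List PWord} (hP : Pre (trimL W) L₁) :
    IsOpenParsing (W ++ s) (L₁ ++ [s]) := by
  obtain ⟨hC, hH, htr⟩ := hP
  apply open_build hst hC hH
  · intro x _ hbad
    exact hbad.2.elim (fun h => hs2 h) (fun h => hs3 h)
  · intro _; exact ⟨hs1, hs2, hs3⟩
  · exact hs1
  · rw [Tight2.flatten_concat, core_append_A _ _ hsA, core_append_A _ _ hsA]
    by_cases hz : trimL L₁.flatten = []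
    · rw [trimL_append_of_nil hz, trimL_append_of_nil (htr ▸ hz)]
    · rw [trimL_append_of_ne_nil hz, trimL_append_of_ne_nil (htr ▸ hz), htr]

lemma open_WA_of {W : PWord} {L₀ : List PWord} (hC : TightChain L₀) (hH : HeadOK L₀)
    (htr : trimL L₀.flatten = trimL W ++ [A]) : IsOpenParsing (W ++ [A]) L₀ := by
  have hz : trimL L₀.flatten ≠ [] := by rw [htr]; simp
  have hfl : L₀.flatten.getLast? = some A := by
    rw [trimL_flatten_suffix_last hz, htr, List.getLast?_concat]
  have hL : LastOK L₀ := lastOK_of_flatten hC.1 hfl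
  refine (open_iff' _ _).mpr ⟨hC, ?_, hH, hL⟩
  rw [core_flatten_eq L₀ hC.1 hL, htr, core_append_A _ _ (by simp),
    trimL_append_nonX _ _ _ (by simp)]

lemma open_WA_to {W : PWord} {L₀ : List PWord} (hO : IsOpenParsing (W ++ [A]) L₀) :
    TightChain L₀ ∧ HeadOK L₀ ∧ LastOK L₀ ∧ trimL L₀.flatten = trimL W ++ [A] := by
  obtain ⟨hC, hcore, hH, hL⟩ := (open_iff' _ _).mp hO
  refine ⟨hC, hH, hL, ?_⟩
  rw [← core_flatten_eq L₀ hC.1 hL, hcore, core_append_A _ _ (by simp),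
    trimL_append_nonX _ _ _ (by simp)]

lemma split_side_bwd {W : PWord} {L₁ : List PWord} {w : PWord}
    (hwt : w ∈ tightWords) (hwform : w = [X, A] ∨ w = [B, A])
    (hO : IsOpenParsing (W ++ [A]) L₁) :
    IsOpenParsing (W ++ (A :: w)) (L₁ ++ [w]) := by
  obtain ⟨hC, hH, hL, htr⟩ := open_WA_to hO
  have hz : trimL L₁.flatten ≠ [] := by rw [htr]; simp
  have hne : L₁ ≠ [] := by intro h0; rw [h0] at hz; simp [trimL] at hz
  have hwA : w.getLast? = some A := by rcases hwform with rfl | rfl <;> rfl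
  have hAwA : (A :: w).getLast? = some A := by rcases hwform with rfl | rfl <;> rfl
  apply open_build hwt hC hH
  · intro x hx hbadx
    exact hL x hx hbadx.1
  · intro h0; exact absurd h0 hne
  · rcases hwform with rfl | rfl <;> simp
  · rw [Tight2.flatten_concat, core_append_A _ _ hwA, core_append_A _ _ hAwA,
      trimL_append_of_ne_nil hz, htr, trimL_append_nonX _ _ _ (by simp)]
    simp

lemma split_AAA (W : PWord) (L : List PWord) :
    IsOpenParsing (W ++ [A, A, A]) L ↔
      ∃ L₁, L = L₁ ++ [([A, A, A] : PWord)] ∧ Pre (trimL W) L₁ := by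
  constructor
  · intro h
    have hcore3 : core (W ++ [A, A, A]) = trimL W ++ [A, A, A] := by
      rw [core_append_A _ _ (by simp), trimL_append_nonX _ _ _ (by simp)]
    obtain ⟨L₀, w, rfl, hwt, hwX, hC0, hH0, hbad, hcase⟩ :=
      open_concat_analysis h (by rw [hcore3]; simp)
    rcases hcase with ⟨hnil, ⟨hw1, hw2⟩, heq⟩ | ⟨hz, heq⟩
    · subst hnil
      rw [hcore3] at heq
      rcases tight_cases hwt with rfl|rfl|rfl|rfl|rfl|rfl|rfl|rfl
      · exact absurd rfl hwX
      · exfalso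
        rw [show trimL [X, A] = [A] from rfl] at heq
        have := congrArg List.length heq; simp at this
      · exfalso
        rw [show trimL [X, A, A] = [A, A] from rfl] at heq
        have := congrArg List.length heq; simp at this
      · -- AXA
        exfalso
        rw [show trimL [A, X, A] = [A, X, A] from rfl] at heq
        have hlen := congrArg List.length heq; simp at hlen
        rw [hlen] at heq; simp at heq
      · -- AAA : the good case
        refine ⟨[], by simp, ⟨by simp [TightChain]; exact List.isChain_nil, by simp [HeadOK], ?_⟩⟩
        rw [show trimL [A, A, A] = [A, A, A] from rfl] at heq
        have hlen := congrArg List.length heq; simp at hlen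
        rw [hlen]; rfl
      · exfalso
        rw [show trimL [B, A] = [B, A] from rfl] at heq
        have := congrArg List.length heq; simp at this
      · exfalso
        rw [show trimL [A, B, A] = [A, B, A] from rfl] at heq
        have hlen := congrArg List.length heq; simp at hlen
        rw [hlen] at heq; simp at heq
      · exfalso
        rw [show trimL [X, X, A] = [A] from rfl] at heq
        have := congrArg List.length heq; simp at this
    · rw [hcore3] at heq
      rcases tight_cases hwt with rfl|rfl|rfl|rfl|rfl|rfl|rfl|rfl
      · exact absurd rfl hwX
      · -- XA
        exfalso
        rw [show ([A, A, A] : PWord) = [A] ++ [A, A] from rfl, ← List.append_assoc] at heq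
        obtain ⟨h1, h2⟩ := List.append_inj' heq rfl
        simp at h2
      · exfalso
        obtain ⟨h1, h2⟩ := List.append_inj' heq rfl
        simp at h2
      · exfalso
        obtain ⟨h1, h2⟩ := List.append_inj' heq rfl
        simp at h2
      · obtain ⟨h1, h2⟩ := List.append_inj' heq rfl
        exact ⟨L₀, rfl, hC0, hH0, h1⟩
      · exfalso
        rw [show ([A, A, A] : PWord) = [A] ++ [A, A] from rfl, ← List.append_assoc] at heq
        obtain ⟨h1, h2⟩ := List.append_inj' heq rfl
        simp at h2
      · exfalso
        obtain ⟨h1, h2⟩ := List.append_inj' heq rfl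
        simp at h2
      · exfalso
        obtain ⟨h1, h2⟩ := List.append_inj' heq rfl
        simp at h2
  · rintro ⟨L₁, rfl, hP⟩
    exact split_main_bwd W _ (by simp [tightWords]) (by simp) (by simp) (by simp) (by simp) hP

end Tight5

namespace Tight6
open PLetter List Tight Tight2 Tight3 Tight4 Tight5

lemma split_AXA (W : PWord) (L : List PWord) :
    IsOpenParsing (W ++ [A, X, A]) L ↔
      (∃ L₁, L = L₁ ++ [([A, X, A] : PWord)] ∧ Pre (trimL W) L₁) ∨
      (∃ L₁, L = L₁ ++ [([X, A] : PWord)] ∧ IsOpenParsing (W ++ [A]) L₁) := by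
  constructor
  · intro h
    have hcore3 : core (W ++ [A, X, A]) = trimL W ++ [A, X, A] := by
      rw [core_append_A _ _ (by simp), trimL_append_nonX _ _ _ (by simp)]
    obtain ⟨L₀, w, rfl, hwt, hwX, hC0, hH0, hbad, hcase⟩ :=
      open_concat_analysis h (by rw [hcore3]; simp)
    rcases hcase with ⟨hnil, ⟨hw1, hw2⟩, heq⟩ | ⟨hz, heq⟩
    · subst hnil
      rw [hcore3] at heq
      rcases tight_cases hwt with rfl|rfl|rfl|rfl|rfl|rfl|rfl|rfl
      · exact absurd rfl hwX
      · exfalso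
        rw [show trimL [X, A] = [A] from rfl] at heq
        have := congrArg List.length heq; simp at this
      · exfalso
        rw [show trimL [X, A, A] = [A, A] from rfl] at heq
        have := congrArg List.length heq; simp at this
      · left
        refine ⟨[], by simp, ⟨by simp [TightChain]; exact List.isChain_nil, by simp [HeadOK], ?_⟩⟩
        rw [show trimL [A, X, A] = [A, X, A] from rfl] at heq
        have hlen := congrArg List.length heq; simp at hlen
        rw [hlen]; rfl
      · exfalso
        rw [show trimL [A, A, A] = [A, A, A] from rfl] at heq
        have hlen := congrArg List.length heq; simp at hlen
        rw [hlen] at heq; simp at heq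
      · exfalso
        rw [show trimL [B, A] = [B, A] from rfl] at heq
        have := congrArg List.length heq; simp at this
      · exfalso
        rw [show trimL [A, B, A] = [A, B, A] from rfl] at heq
        have hlen := congrArg List.length heq; simp at hlen
        rw [hlen] at heq; simp at heq
      · exfalso
        rw [show trimL [X, X, A] = [A] from rfl] at heq
        have := congrArg List.length heq; simp at this
    · rw [hcore3] at heq
      rcases tight_cases hwt with rfl|rfl|rfl|rfl|rfl|rfl|rfl|rfl
      · exact absurd rfl hwX
      · -- XA : side case
        rw [show ([A, X, A] : PWord) = [A] ++ [X, A] from rfl, ← List.append_assoc] at heq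
        obtain ⟨h1, _⟩ := List.append_inj' heq rfl
        exact Or.inr ⟨L₀, rfl, open_WA_of hC0 hH0 h1⟩
      · exfalso
        obtain ⟨_, h2⟩ := List.append_inj' heq rfl
        simp at h2
      · obtain ⟨h1, _⟩ := List.append_inj' heq rfl
        exact Or.inl ⟨L₀, rfl, hC0, hH0, h1⟩
      · exfalso
        obtain ⟨_, h2⟩ := List.append_inj' heq rfl
        simp at h2
      · exfalso
        rw [show ([A, X, A] : PWord) = [A] ++ [X, A] from rfl, ← List.append_assoc] at heq
        obtain ⟨_, h2⟩ := List.append_inj' heq rfl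
        simp at h2
      · exfalso
        obtain ⟨_, h2⟩ := List.append_inj' heq rfl
        simp at h2
      · exfalso
        obtain ⟨_, h2⟩ := List.append_inj' heq rfl
        simp at h2
  · rintro (⟨L₁, rfl, hP⟩ | ⟨L₁, rfl, hO⟩)
    · exact split_main_bwd W _ (by simp [tightWords]) (by simp) (by simp) (by simp) (by simp) hP
    · exact split_side_bwd (by simp [tightWords]) (Or.inl rfl) hO

lemma split_ABA (W : PWord) (L : List PWord) :
    IsOpenParsing (W ++ [A, B, A]) L ↔
      (∃ L₁, L = L₁ ++ [([A, B, A] : PWord)] ∧ Pre (trimL W) L₁) ∨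
      (∃ L₁, L = L₁ ++ [([B, A] : PWord)] ∧ IsOpenParsing (W ++ [A]) L₁) := by
  constructor
  · intro h
    have hcore3 : core (W ++ [A, B, A]) = trimL W ++ [A, B, A] := by
      rw [core_append_A _ _ (by simp), trimL_append_nonX _ _ _ (by simp)]
    obtain ⟨L₀, w, rfl, hwt, hwX, hC0, hH0, hbad, hcase⟩ :=
      open_concat_analysis h (by rw [hcore3]; simp)
    rcases hcase with ⟨hnil, ⟨hw1, hw2⟩, heq⟩ | ⟨hz, heq⟩
    · subst hnil
      rw [hcore3] at heq
      rcases tight_cases hwt with rfl|rfl|rfl|rfl|rfl|rfl|rfl|rfl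
      · exact absurd rfl hwX
      · exfalso
        rw [show trimL [X, A] = [A] from rfl] at heq
        have := congrArg List.length heq; simp at this
      · exfalso
        rw [show trimL [X, A, A] = [A, A] from rfl] at heq
        have := congrArg List.length heq; simp at this
      · exfalso
        rw [show trimL [A, X, A] = [A, X, A] from rfl] at heq
        have hlen := congrArg List.length heq; simp at hlen
        rw [hlen] at heq; simp at heq
      · exfalso
        rw [show trimL [A, A, A] = [A, A, A] from rfl] at heq
        have hlen := congrArg List.length heq; simp at hlen
        rw [hlen] at heq; simp at heq
      · exfalso
        rw [show trimL [B, A] = [B, A] from rfl] at heq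
        have := congrArg List.length heq; simp at this
      · left
        refine ⟨[], by simp, ⟨by simp [TightChain]; exact List.isChain_nil, by simp [HeadOK], ?_⟩⟩
        rw [show trimL [A, B, A] = [A, B, A] from rfl] at heq
        have hlen := congrArg List.length heq; simp at hlen
        rw [hlen]; rfl
      · exfalso
        rw [show trimL [X, X, A] = [A] from rfl] at heq
        have := congrArg List.length heq; simp at this
    · rw [hcore3] at heq
      rcases tight_cases hwt with rfl|rfl|rfl|rfl|rfl|rfl|rfl|rfl
      · exact absurd rfl hwX
      · exfalso
        rw [show ([A, B, A] : PWord) = [A] ++ [B, A] from rfl, ← List.append_assoc] at heq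
        obtain ⟨_, h2⟩ := List.append_inj' heq rfl
        simp at h2
      · exfalso
        obtain ⟨_, h2⟩ := List.append_inj' heq rfl
        simp at h2
      · exfalso
        obtain ⟨_, h2⟩ := List.append_inj' heq rfl
        simp at h2
      · exfalso
        obtain ⟨_, h2⟩ := List.append_inj' heq rfl
        simp at h2
      · -- BA : side case
        rw [show ([A, B, A] : PWord) = [A] ++ [B, A] from rfl, ← List.append_assoc] at heq
        obtain ⟨h1, _⟩ := List.append_inj' heq rfl
        exact Or.inr ⟨L₀, rfl, open_WA_of hC0 hH0 h1⟩
      · obtain ⟨h1, _⟩ := List.append_inj' heq rfl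
        exact Or.inl ⟨L₀, rfl, hC0, hH0, h1⟩
      · exfalso
        obtain ⟨_, h2⟩ := List.append_inj' heq rfl
        simp at h2
  · rintro (⟨L₁, rfl, hP⟩ | ⟨L₁, rfl, hO⟩)
    · exact split_main_bwd W _ (by simp [tightWords]) (by simp) (by simp) (by simp) (by simp) hP
    · exact split_side_bwd (by simp [tightWords]) (Or.inr rfl) hO

lemma split_XAA (W : PWord) (L : List PWord) :
    IsOpenParsing (W ++ [X, A, A]) L ↔
      ∃ L₁, L = L₁ ++ [([X, A, A] : PWord)] ∧ Pre (trimL W) L₁ := by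
  constructor
  · intro h
    by_cases hT : trimL W = []
    · have hcore3 : core (W ++ [X, A, A]) = [A, A] := by
        rw [core_append_A _ _ (by simp), trimL_append_of_nil hT]; rfl
      obtain ⟨L₀, w, rfl, hwt, hwX, hC0, hH0, hbad, hcase⟩ :=
        open_concat_analysis h (by rw [hcore3]; simp)
      rcases hcase with ⟨hnil, ⟨hw1, hw2⟩, heq⟩ | ⟨hz, heq⟩
      · subst hnil
        rw [hcore3] at heq
        rcases tight_cases hwt with rfl|rfl|rfl|rfl|rfl|rfl|rfl|rfl
        · exact absurd rfl hwX
        · exact absurd heq (by decide)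
        · refine ⟨[], by simp, ⟨by simp [TightChain]; exact List.isChain_nil, by simp [HeadOK], ?_⟩⟩
          rw [hT]; rfl
        · exact absurd heq (by decide)
        · exact absurd heq (by decide)
        · exact absurd heq (by decide)
        · exact absurd heq (by decide)
        · exact absurd heq (by decide)
      · exfalso
        rw [hcore3] at heq
        have hzp : 0 < (trimL L₀.flatten).length := List.length_pos_iff.mpr hz
        rcases tight_cases hwt with rfl|rfl|rfl|rfl|rfl|rfl|rfl|rfl
        · exact hwX rfl
        all_goals (have hll := congrArg List.length heq; simp only [List.length_append, List.length_cons, List.length_nil] at hll; omega)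
    · have hcore3 : core (W ++ [X, A, A]) = trimL W ++ [X, A, A] := by
        rw [core_append_A _ _ (by simp), trimL_append_of_ne_nil hT]
      obtain ⟨L₀, w, rfl, hwt, hwX, hC0, hH0, hbad, hcase⟩ :=
        open_concat_analysis h (by rw [hcore3]; simp)
      have hTp : 0 < (trimL W).length := List.length_pos_iff.mpr hT
      rcases hcase with ⟨hnil, ⟨hw1, hw2⟩, heq⟩ | ⟨hz, heq⟩
      · exfalso
        subst hnil
        rw [hcore3] at heq
        rcases tight_cases hwt with rfl|rfl|rfl|rfl|rfl|rfl|rfl|rfl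
        · exact absurd rfl hwX
        · rw [show trimL [X, A] = [A] from rfl] at heq
          have hll := congrArg List.length heq; simp only [List.length_append, List.length_cons, List.length_nil] at hll; omega
        · rw [show trimL [X, A, A] = [A, A] from rfl] at heq
          have hll := congrArg List.length heq; simp only [List.length_append, List.length_cons, List.length_nil] at hll; omega
        · rw [show trimL [A, X, A] = [A, X, A] from rfl] at heq
          have hll := congrArg List.length heq; simp only [List.length_append, List.length_cons, List.length_nil] at hll; omega
        · rw [show trimL [A, A, A] = [A, A, A] from rfl] at heq
          have hll := congrArg List.length heq; simp only [List.length_append, List.length_cons, List.length_nil] at hll; omega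
        · rw [show trimL [B, A] = [B, A] from rfl] at heq
          have hll := congrArg List.length heq; simp only [List.length_append, List.length_cons, List.length_nil] at hll; omega
        · rw [show trimL [A, B, A] = [A, B, A] from rfl] at heq
          have hll := congrArg List.length heq; simp only [List.length_append, List.length_cons, List.length_nil] at hll; omega
        · rw [show trimL [X, X, A] = [A] from rfl] at heq
          have hll := congrArg List.length heq; simp only [List.length_append, List.length_cons, List.length_nil] at hll; omega
      · rw [hcore3] at heq
        rcases tight_cases hwt with rfl|rfl|rfl|rfl|rfl|rfl|rfl|rfl
        · exact absurd rfl hwX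
        · exfalso
          rw [show ([X, A, A] : PWord) = [X] ++ [A, A] from rfl, ← List.append_assoc] at heq
          obtain ⟨_, h2⟩ := List.append_inj' heq rfl
          simp at h2
        · obtain ⟨h1, _⟩ := List.append_inj' heq rfl
          exact ⟨L₀, rfl, hC0, hH0, h1⟩
        · exfalso
          obtain ⟨_, h2⟩ := List.append_inj' heq rfl
          simp at h2
        · exfalso
          obtain ⟨_, h2⟩ := List.append_inj' heq rfl
          simp at h2
        · exfalso
          rw [show ([X, A, A] : PWord) = [X] ++ [A, A] from rfl, ← List.append_assoc] at heq
          obtain ⟨_, h2⟩ := List.append_inj' heq rfl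
          simp at h2
        · exfalso
          obtain ⟨_, h2⟩ := List.append_inj' heq rfl
          simp at h2
        · exfalso
          obtain ⟨_, h2⟩ := List.append_inj' heq rfl
          simp at h2
  · rintro ⟨L₁, rfl, hP⟩
    exact split_main_bwd W _ (by simp [tightWords]) (by simp) (by simp) (by simp) (by simp) hP

lemma split_XXA (W : PWord) (L : List PWord) :
    IsOpenParsing (W ++ [X, X, A]) L ↔
      ∃ L₁, L = L₁ ++ [([X, X, A] : PWord)] ∧ Pre (trimL W) L₁ := by
  constructor
  · intro h
    by_cases hT : trimL W = []
    · have hcore3 : core (W ++ [X, X, A]) = [A] := by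
        rw [core_append_A _ _ (by simp), trimL_append_of_nil hT]; rfl
      obtain ⟨L₀, w, rfl, hwt, hwX, hC0, hH0, hbad, hcase⟩ :=
        open_concat_analysis h (by rw [hcore3]; simp)
      rcases hcase with ⟨hnil, ⟨hw1, hw2⟩, heq⟩ | ⟨hz, heq⟩
      · subst hnil
        rw [hcore3] at heq
        rcases tight_cases hwt with rfl|rfl|rfl|rfl|rfl|rfl|rfl|rfl
        · exact absurd rfl hwX
        · exact absurd rfl hw1
        · exact absurd heq (by decide)
        · exact absurd heq (by decide)
        · exact absurd heq (by decide)
        · exact absurd heq (by decide)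
        · exact absurd heq (by decide)
        · refine ⟨[], by simp, ⟨by simp [TightChain]; exact List.isChain_nil, by simp [HeadOK], ?_⟩⟩
          rw [hT]; rfl
      · exfalso
        rw [hcore3] at heq
        have hzp : 0 < (trimL L₀.flatten).length := List.length_pos_iff.mpr hz
        rcases tight_cases hwt with rfl|rfl|rfl|rfl|rfl|rfl|rfl|rfl
        · exact hwX rfl
        all_goals (have hll := congrArg List.length heq; simp only [List.length_append, List.length_cons, List.length_nil] at hll; omega)
    · have hcore3 : core (W ++ [X, X, A]) = trimL W ++ [X, X, A] := by
        rw [core_append_A _ _ (by simp), trimL_append_of_ne_nil hT]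
      obtain ⟨L₀, w, rfl, hwt, hwX, hC0, hH0, hbad, hcase⟩ :=
        open_concat_analysis h (by rw [hcore3]; simp)
      have hTp : 0 < (trimL W).length := List.length_pos_iff.mpr hT
      rcases hcase with ⟨hnil, ⟨hw1, hw2⟩, heq⟩ | ⟨hz, heq⟩
      · exfalso
        subst hnil
        rw [hcore3] at heq
        rcases tight_cases hwt with rfl|rfl|rfl|rfl|rfl|rfl|rfl|rfl
        · exact absurd rfl hwX
        · rw [show trimL [X, A] = [A] from rfl] at heq
          have hll := congrArg List.length heq; simp only [List.length_append, List.length_cons, List.length_nil] at hll; omega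
        · rw [show trimL [X, A, A] = [A, A] from rfl] at heq
          have hll := congrArg List.length heq; simp only [List.length_append, List.length_cons, List.length_nil] at hll; omega
        · rw [show trimL [A, X, A] = [A, X, A] from rfl] at heq
          have hll := congrArg List.length heq; simp only [List.length_append, List.length_cons, List.length_nil] at hll; omega
        · rw [show trimL [A, A, A] = [A, A, A] from rfl] at heq
          have hll := congrArg List.length heq; simp only [List.length_append, List.length_cons, List.length_nil] at hll; omega
        · rw [show trimL [B, A] = [B, A] from rfl] at heq
          have hll := congrArg List.length heq; simp only [List.length_append, List.length_cons, List.length_nil] at hll; omega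
        · rw [show trimL [A, B, A] = [A, B, A] from rfl] at heq
          have hll := congrArg List.length heq; simp only [List.length_append, List.length_cons, List.length_nil] at hll; omega
        · rw [show trimL [X, X, A] = [A] from rfl] at heq
          have hll := congrArg List.length heq; simp only [List.length_append, List.length_cons, List.length_nil] at hll; omega
      · rw [hcore3] at heq
        rcases tight_cases hwt with rfl|rfl|rfl|rfl|rfl|rfl|rfl|rfl
        · exact absurd rfl hwX
        · -- XA after X : Bad contradiction
          exfalso
          rw [show ([X, X, A] : PWord) = [X] ++ [X, A] from rfl, ← List.append_assoc] at heq
          obtain ⟨h1, _⟩ := List.append_inj' heq rfl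
          have hzlast : (trimL L₀.flatten).getLast? = some X := by
            rw [h1]; exact List.getLast?_concat
          have hfl : L₀.flatten.getLast? = some X := by
            rw [trimL_flatten_suffix_last hz]; exact hzlast
          have hL0ne : L₀ ≠ [] := by
            intro h0; rw [h0] at hz; simp [trimL] at hz
          have hlw := last_word_X hC0.1 hL0ne hfl
          exact hbad [X] hlw ⟨rfl, Or.inl rfl⟩
        · exfalso
          obtain ⟨_, h2⟩ := List.append_inj' heq rfl
          simp at h2
        · exfalso
          obtain ⟨_, h2⟩ := List.append_inj' heq rfl
          simp at h2
        · exfalso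
          obtain ⟨_, h2⟩ := List.append_inj' heq rfl
          simp at h2
        · exfalso
          rw [show ([X, X, A] : PWord) = [X] ++ [X, A] from rfl, ← List.append_assoc] at heq
          obtain ⟨_, h2⟩ := List.append_inj' heq rfl
          simp at h2
        · exfalso
          obtain ⟨_, h2⟩ := List.append_inj' heq rfl
          simp at h2
        · obtain ⟨h1, _⟩ := List.append_inj' heq rfl
          exact ⟨L₀, rfl, hC0, hH0, h1⟩
  · rintro ⟨L₁, rfl, hP⟩
    exact split_main_bwd W _ (by simp [tightWords]) (by simp) (by simp) (by simp) (by simp) hP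

end Tight6

namespace Tight7
open PLetter List Tight Tight2 Tight3 Tight4 Tight5 Tight6

lemma wordOf_inj : Function.Injective wordOf := by decide

lemma tight_wordOf {w : PWord} (h : w ∈ tightWords) : ∃ i, wordOf i = w := by
  rcases tight_cases h with rfl|rfl|rfl|rfl|rfl|rfl|rfl|rfl
  exacts [⟨0, rfl⟩, ⟨1, rfl⟩, ⟨2, rfl⟩, ⟨4, rfl⟩, ⟨5, rfl⟩, ⟨6, rfl⟩, ⟨7, rfl⟩, ⟨8, rfl⟩]

noncomputable def pSet (n : ℕ) : Finset (List PWord) :=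
  (Finset.range n).biUnion
    (fun k => Finset.image (fun f : Fin k → Fin 9 => (List.ofFn f).map wordOf) Finset.univ)

lemma mem_pSet {n : ℕ} {L : List PWord} :
    L ∈ pSet n ↔ L.length < n ∧ ∀ w ∈ L, ∃ i, wordOf i = w := by
  constructor
  · intro h
    obtain ⟨k, hk, hL⟩ := Finset.mem_biUnion.mp h
    obtain ⟨f, _, rfl⟩ := Finset.mem_image.mp hL
    constructor
    · simpa using Finset.mem_range.mp hk
    · intro w hw
      simp only [List.mem_map] at hw
      obtain ⟨a, _, rfl⟩ := hw
      exact ⟨a, rfl⟩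
  · rintro ⟨h1, h2⟩
    refine Finset.mem_biUnion.mpr ⟨L.length, Finset.mem_range.mpr h1, Finset.mem_image.mpr
      ⟨fun i => (h2 (L.get i) (List.get_mem L i)).choose, Finset.mem_univ _, ?_⟩⟩
    refine List.ext_getElem (by simp) ?_
    intro i hi1 hi2
    simp only [List.getElem_map, List.getElem_ofFn]
    exact (h2 (L.get ⟨i, hi2⟩) (List.get_mem L ⟨i, hi2⟩)).choose_spec

lemma length_le_flatten {L : List PWord} (h : ∀ w ∈ L, w ∈ tightWords) :
    L.length ≤ L.flatten.length := by
  induction L with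
  | nil => simp
  | cons w t ih =>
    simp only [List.flatten_cons, List.length_append, List.length_cons]
    have h1 : w ≠ [] := tight_ne_nil (h w (by simp))
    have h1' : 0 < w.length := List.length_pos_iff.mpr h1
    have h2 := ih (fun u hu => h u (by simp [hu]))
    omega

lemma open_length {W : PWord} {L : List PWord} (h : IsOpenParsing W L) :
    L.length ≤ (core W).length + 2 := by
  obtain ⟨hC, hcore, hH, hL⟩ := (open_iff' W L).mp h
  rcases hLc : L with _ | ⟨w₁, L'⟩
  · simp
  · subst hLc
    have hw1t : w₁ ∈ tightWords := hC.1 w₁ (by simp)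
    have hw1 : w₁ ≠ [X] := (hH w₁ rfl).1
    have key : trimL w₁ ≠ [] ∧ w₁.length ≤ (trimL w₁).length + 2 := by
      rcases tight_cases hw1t with rfl|rfl|rfl|rfl|rfl|rfl|rfl|rfl
      · exact absurd rfl hw1
      all_goals exact ⟨by decide, by decide⟩
    have hfl : (w₁ :: L').flatten = w₁ ++ L'.flatten := rfl
    have htr : trimL ((w₁ :: L').flatten) = trimL w₁ ++ L'.flatten := by
      rw [hfl, trimL_append_of_ne_nil key.1]
    have hcore' : core ((w₁ :: L').flatten) = trimL ((w₁ :: L').flatten) :=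
      core_flatten_eq _ hC.1 hL
    have e1 := congrArg List.length hcore
    rw [hcore', htr] at e1
    simp only [List.length_append] at e1
    have hlen : (w₁ :: L').flatten.length ≤ (core W).length + 2 := by
      rw [hfl]; simp only [List.length_append]; omega
    have hlf := length_le_flatten hC.1 (L := w₁ :: L')
    omega

lemma openVal_eq (W : PWord) {n : ℕ} (hn : W.length + 3 ≤ n) :
    openVal W = ∑ L ∈ pSet n, if IsOpenParsing W L then parseVal tightCoeff L else 0 := by
  have hdisj : (↑(Finset.range (W.length + 3)) : Set ℕ).PairwiseDisjoint
      (fun k => Finset.image (fun f : Fin k → Fin 9 => (List.ofFn f).map wordOf) Finset.univ) := by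
    intro k _ l _ hkl
    simp only [Function.onFun]
    rw [Finset.disjoint_left]
    intro L hLk hLl
    obtain ⟨f, _, rfl⟩ := Finset.mem_image.mp hLk
    obtain ⟨g, _, hg⟩ := Finset.mem_image.mp hLl
    apply hkl
    have := congrArg List.length hg
    simpa using this.symm
  have h1 : openVal W
      = ∑ L ∈ pSet (W.length + 3), if IsOpenParsing W L then parseVal tightCoeff L else 0 := by
    rw [openVal, pSet, Finset.sum_biUnion hdisj]
    apply Finset.sum_congr rfl
    intro k _
    rw [Finset.sum_image]
    intro f _ g _ hfg
    exact List.ofFn_inj.mp (List.map_injective_iff.mpr wordOf_inj hfg)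
  rw [h1]
  apply Finset.sum_subset
  · intro L hL
    rw [mem_pSet] at hL ⊢
    exact ⟨lt_of_lt_of_le hL.1 hn, hL.2⟩
  · intro L hL hnot
    rw [if_neg]
    intro hO
    apply hnot
    rw [mem_pSet]
    refine ⟨?_, (mem_pSet.mp hL).2⟩
    have h2 := open_length hO
    have h3 := core_length_le W
    omega

lemma parseVal_append (c : PWord → ℤ) (L₁ L₂ : List PWord) :
    parseVal c (L₁ ++ L₂) = parseVal c L₁ * parseVal c L₂ := by
  simp only [parseVal, List.map_append, List.prod_append, List.sum_append, pow_add, map_mul]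
  ring

lemma parseVal_repX (m : ℕ) :
    parseVal tightCoeff (List.replicate m ([X] : PWord)) = 1 := by
  have e1 : tightCoeff [X] = 1 := by decide
  have e2 : wordWt [X] = 0 := by decide
  simp [parseVal, List.map_replicate, e1, e2, List.prod_replicate, List.sum_replicate]

lemma sum_transfer (P : List PWord → Prop) (E : List PWord)
    (hE : ∀ w ∈ E, ∃ i, wordOf i = w) {n N : ℕ}
    (hbound : ∀ L₂, P L₂ → L₂.length < n ∧ L₂.length + E.length < N) :
    (∑ L ∈ pSet N, if (∃ L₂, L = L₂ ++ E ∧ P L₂) then parseVal tightCoeff L else 0)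
      = (∑ L ∈ pSet n, if P L then parseVal tightCoeff L else 0)
        * parseVal tightCoeff E := by
  have himg : (pSet N).filter (fun L => ∃ L₂, L = L₂ ++ E ∧ P L₂)
      = ((pSet n).filter P).image (· ++ E) := by
    ext L
    simp only [Finset.mem_filter, Finset.mem_image]
    constructor
    · rintro ⟨hmem, L₂, rfl, hP⟩
      refine ⟨L₂, ⟨mem_pSet.mpr ⟨(hbound L₂ hP).1, ?_⟩, hP⟩, rfl⟩
      intro w hw
      exact (mem_pSet.mp hmem).2 w (by simp [hw])
    · rintro ⟨L₂, ⟨hmem, hP⟩, rfl⟩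
      refine ⟨mem_pSet.mpr ⟨?_, ?_⟩, L₂, rfl, hP⟩
      · have := (hbound L₂ hP).2
        simp only [List.length_append]
        omega
      · intro w hw
        rcases List.mem_append.mp hw with h | h
        · exact (mem_pSet.mp hmem).2 w h
        · exact hE w h
  rw [← Finset.sum_filter, himg, Finset.sum_image
    (fun x _ y _ h => List.append_cancel_right h)]
  rw [Finset.sum_congr rfl (fun L₂ _ => parseVal_append tightCoeff L₂ E)]
  rw [← Finset.sum_mul, Finset.sum_filter]

end Tight7

namespace Tight8
open PLetter List Tight Tight2 Tight3 Tight4 Tight5 Tight6 Tight7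

lemma parseVal_single (s : PWord) :
    parseVal tightCoeff [s] = Polynomial.C (tightCoeff s) * Polynomial.X ^ (wordWt s) := by
  simp [parseVal]

lemma hE_main (W : PWord) (s : PWord) (hst : s ∈ tightWords) :
    ∀ w ∈ (List.replicate (mX W) ([X] : PWord) ++ [s]), ∃ i, wordOf i = w := by
  intro w hw
  rcases List.mem_append.mp hw with h | h
  · rw [List.eq_of_mem_replicate h]; exact ⟨0, rfl⟩
  · rw [List.mem_singleton.mp h]; exact tight_wordOf hst

lemma hbound_main (W : PWord) (s : PWord) :
    ∀ L₂, IsOpenParsing W L₂ → L₂.length < W.length + 3 ∧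
      L₂.length + (List.replicate (mX W) ([X] : PWord) ++ [s]).length < W.length + 6 := by
  intro L₂ hO
  have h1 := open_length hO
  have h2 := core_length_le W
  constructor
  · omega
  · simp only [List.length_append, List.length_replicate, List.length_cons, List.length_nil]
    omega

lemma hbound_side (W : PWord) (w2 : PWord) (hw2 : w2.length ≤ 2) :
    ∀ L₁, IsOpenParsing (W ++ [A]) L₁ → L₁.length < W.length + 4 ∧
      L₁.length + ([w2] : List PWord).length < W.length + 6 := by
  intro L₁ hO
  have h1 := open_length hO
  have h2 := core_length_le (W ++ [A])
  simp only [List.length_append, List.length_cons, List.length_nil] at h2 ⊢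
  omega

lemma pre_concat_iff (W : PWord) (s : PWord) (L : List PWord) :
    (∃ L₁, L = L₁ ++ [s] ∧ Pre (trimL W) L₁) ↔
      (∃ L₂, L = L₂ ++ (List.replicate (mX W) ([X] : PWord) ++ [s]) ∧
        IsOpenParsing W L₂) := by
  constructor
  · rintro ⟨L₁, rfl, hP⟩
    obtain ⟨L₂, rfl, hO⟩ := (pre_iff W L₁).mp hP
    exact ⟨L₂, by rw [List.append_assoc], hO⟩
  · rintro ⟨L₂, rfl, hO⟩
    exact ⟨L₂ ++ List.replicate (mX W) [X], by rw [List.append_assoc],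
      (pre_iff W _).mpr ⟨L₂, rfl, hO⟩⟩

lemma val_main (W : PWord) (s : PWord)
    (hsplit : ∀ L, IsOpenParsing (W ++ s) L ↔ ∃ L₁, L = L₁ ++ [s] ∧ Pre (trimL W) L₁)
    (hst : s ∈ tightWords) (hs3 : s.length = 3) :
    openVal (W ++ s)
      = openVal W * (Polynomial.C (tightCoeff s) * Polynomial.X ^ (wordWt s)) := by
  rw [openVal_eq (W ++ s) (n := W.length + 6)
      (by simp only [List.length_append, hs3]; omega),
    openVal_eq W (n := W.length + 3) le_rfl]
  calc ∑ L ∈ pSet (W.length + 6),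
        (if IsOpenParsing (W ++ s) L then parseVal tightCoeff L else 0)
      = ∑ L ∈ pSet (W.length + 6),
        (if (∃ L₂, L = L₂ ++ (List.replicate (mX W) ([X] : PWord) ++ [s]) ∧
            IsOpenParsing W L₂) then parseVal tightCoeff L else 0) :=
        Finset.sum_congr rfl
          (fun L _ => if_congr ((hsplit L).trans (pre_concat_iff W s L)) rfl rfl)
    _ = (∑ L ∈ pSet (W.length + 3), if IsOpenParsing W L then parseVal tightCoeff L else 0)
        * parseVal tightCoeff (List.replicate (mX W) ([X] : PWord) ++ [s]) :=
        sum_transfer _ _ (hE_main W s hst) (hbound_main W s)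
    _ = _ := by rw [parseVal_append, parseVal_repX, one_mul, parseVal_single]

lemma val_two (W : PWord) (s w2 : PWord) (hw2t : w2 ∈ tightWords)
    (hsplit : ∀ L, IsOpenParsing (W ++ s) L ↔
      (∃ L₁, L = L₁ ++ [s] ∧ Pre (trimL W) L₁) ∨
      (∃ L₁, L = L₁ ++ [w2] ∧ IsOpenParsing (W ++ [A]) L₁))
    (hst : s ∈ tightWords) (hs3 : s.length = 3) (hne : s ≠ w2) (hw2 : w2.length ≤ 2) :
    openVal (W ++ s)
      = openVal W * (Polynomial.C (tightCoeff s) * Polynomial.X ^ (wordWt s))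
        + openVal (W ++ [A]) * (Polynomial.C (tightCoeff w2) * Polynomial.X ^ (wordWt w2)) := by
  rw [openVal_eq (W ++ s) (n := W.length + 6)
      (by simp only [List.length_append, hs3]; omega),
    openVal_eq W (n := W.length + 3) le_rfl,
    openVal_eq (W ++ [A]) (n := W.length + 4)
      (by simp only [List.length_append, List.length_cons, List.length_nil]; omega)]
  have hiff : ∀ L, IsOpenParsing (W ++ s) L ↔
      ((∃ L₂, L = L₂ ++ (List.replicate (mX W) ([X] : PWord) ++ [s]) ∧ IsOpenParsing W L₂) ∨
       (∃ L₁, L = L₁ ++ [w2] ∧ IsOpenParsing (W ++ [A]) L₁)) :=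
    fun L => (hsplit L).trans (or_congr (pre_concat_iff W s L) Iff.rfl)
  have hdisj : ∀ L : List PWord,
      ¬((∃ L₂, L = L₂ ++ (List.replicate (mX W) ([X] : PWord) ++ [s]) ∧ IsOpenParsing W L₂) ∧
        (∃ L₁, L = L₁ ++ [w2] ∧ IsOpenParsing (W ++ [A]) L₁)) := by
    rintro L ⟨⟨L₂, rfl, _⟩, ⟨L₁, heq, _⟩⟩
    have h1 : (L₂ ++ (List.replicate (mX W) ([X] : PWord) ++ [s])).getLast? = some s := by
      rw [← List.append_assoc, List.getLast?_concat]
    have h2 : (L₂ ++ (List.replicate (mX W) ([X] : PWord) ++ [s])).getLast? = some w2 := by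
      rw [heq, List.getLast?_concat]
    rw [h1] at h2
    exact hne (Option.some_inj.mp h2)
  have hsplit2 : ∀ L, (if IsOpenParsing (W ++ s) L then parseVal tightCoeff L else 0)
      = (if (∃ L₂, L = L₂ ++ (List.replicate (mX W) ([X] : PWord) ++ [s]) ∧
            IsOpenParsing W L₂) then parseVal tightCoeff L else 0)
        + (if (∃ L₁, L = L₁ ++ [w2] ∧ IsOpenParsing (W ++ [A]) L₁) then
            parseVal tightCoeff L else 0) := by
    intro L
    by_cases h1 : (∃ L₂, L = L₂ ++ (List.replicate (mX W) ([X] : PWord) ++ [s]) ∧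
        IsOpenParsing W L₂)
    · rw [if_pos h1, if_pos ((hiff L).mpr (Or.inl h1)),
        if_neg (fun h2 => hdisj L ⟨h1, h2⟩), add_zero]
    · by_cases h2 : (∃ L₁, L = L₁ ++ [w2] ∧ IsOpenParsing (W ++ [A]) L₁)
      · rw [if_pos h2, if_pos ((hiff L).mpr (Or.inr h2)), if_neg h1, zero_add]
      · have hno : ¬ IsOpenParsing (W ++ s) L := by
          intro h
          rcases (hiff L).mp h with h' | h'
          exacts [h1 h', h2 h']
        rw [if_neg hno, if_neg h1, if_neg h2, add_zero]
  rw [Finset.sum_congr rfl (fun L _ => hsplit2 L), Finset.sum_add_distrib]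
  congr 1
  · exact (sum_transfer _ _ (hE_main W s hst) (hbound_main W s)).trans
      (by rw [parseVal_append, parseVal_repX, one_mul, parseVal_single])
  · refine (sum_transfer _ _ ?_ (hbound_side W w2 hw2)).trans (by rw [parseVal_single])
    intro w hw
    rw [List.mem_singleton.mp hw]
    exact tight_wordOf hw2t

end Tight8

open PLetter in
/-- **Right identities** for open values in the tight puzzle. -/
theorem right_identities (W : PWord) :
    openVal (W ++ [A, A, A]) + Polynomial.X * openVal W = 0 ∧
    openVal (W ++ [X, A, A]) - Polynomial.X * openVal W = 0 ∧
    openVal (W ++ [X, X, A]) + Polynomial.X * openVal W = 0 ∧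
    openVal (W ++ [A, X, A]) - Polynomial.X * openVal (W ++ [A])
      - 2 * Polynomial.X * openVal W = 0 ∧
    openVal (W ++ [A, B, A]) + Polynomial.X * openVal (W ++ [A])
      + Polynomial.X * openVal W = 0 := by
  have c1 : (Polynomial.C (1 : ℤ)) = 1 := map_one _
  have cm1 : (Polynomial.C (-1 : ℤ)) = -1 := by rw [map_neg, map_one]
  have c2 : (Polynomial.C (2 : ℤ)) = 2 := by
    rw [show (2 : ℤ) = 1 + 1 from rfl, map_add, map_one]; norm_num
  have hAAA := Tight8.val_main W [A, A, A] (Tight5.split_AAA W) (by simp [tightWords]) rfl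
  have hXAA := Tight8.val_main W [X, A, A] (Tight6.split_XAA W) (by simp [tightWords]) rfl
  have hXXA := Tight8.val_main W [X, X, A] (Tight6.split_XXA W) (by simp [tightWords]) rfl
  have hAXA := Tight8.val_two W [A, X, A] [X, A] (by simp [tightWords]) (Tight6.split_AXA W)
    (by simp [tightWords]) rfl (by simp) (by simp)
  have hABA := Tight8.val_two W [A, B, A] [B, A] (by simp [tightWords]) (Tight6.split_ABA W)
    (by simp [tightWords]) rfl (by simp) (by simp)
  rw [show tightCoeff [A, A, A] = -1 from by decide, show wordWt [A, A, A] = 1 from by decide,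
    cm1] at hAAA
  rw [show tightCoeff [X, A, A] = 1 from by decide, show wordWt [X, A, A] = 1 from by decide,
    c1] at hXAA
  rw [show tightCoeff [X, X, A] = -1 from by decide, show wordWt [X, X, A] = 1 from by decide,
    cm1] at hXXA
  rw [show tightCoeff [A, X, A] = 2 from by decide, show wordWt [A, X, A] = 1 from by decide,
    show tightCoeff [X, A] = 1 from by decide, show wordWt [X, A] = 1 from by decide,
    c2, c1] at hAXA
  rw [show tightCoeff [A, B, A] = -1 from by decide, show wordWt [A, B, A] = 1 from by decide,
    show tightCoeff [B, A] = -1 from by decide, show wordWt [B, A] = 1 from by decide,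
    cm1] at hABA
  refine ⟨?_, ?_, ?_, ?_, ?_⟩
  · rw [hAAA]; ring
  · rw [hXAA]; ring
  · rw [hXXA]; ring
  · rw [hAXA]; ring
  · rw [hABA]; ring
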